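/- Let p be a polynomial in two real variables whose total degree is odd (p : MvPolynomial (Fin 2) ℝ with Odd p.totalDegree). Then the real zero set {x : Fin 2 → ℝ | eval x p = 0} is unbounded. In particular, the minimal polynomial defining the boundary of a bounded algebraic domain necessarily has even degree. -/

import Mathlib

open MvPolynomial

lemma coeff_aeval_CX (p : MvPolynomial (Fin 2) ℝ) (u : Fin 2 → ℝ) (k : ℕ) :
    (MvPolynomial.aeval (fun i => Polynomial.C (u i) * Polynomial.X) p).coeff k
      = eval u (homogeneousComponent k p) := by
  induction p using MvPolynomial.induction_on' with
  | monomial m c =>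
      rw [aeval_monomial]
      have h1 : (m.prod fun i e => (Polynomial.C (u i) * Polynomial.X) ^ e)
          = Polynomial.C (m.prod fun i e => u i ^ e) * Polynomial.X ^ (Finsupp.degree m) := by
        rw [Finsupp.prod, Finsupp.degree_apply, ← Finset.prod_pow_eq_pow_sum, Finsupp.prod, map_prod,
          ← Finset.prod_mul_distrib]
        exact Finset.prod_congr rfl fun i _ => by rw [mul_pow, map_pow]
      rw [h1, Polynomial.algebraMap_eq, ← mul_assoc, ← Polynomial.C_mul,
        Polynomial.coeff_C_mul, Polynomial.coeff_X_pow,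
        homogeneousComponent_of_mem ((mem_homogeneousSubmodule _ _).2
          (isHomogeneous_monomial (n := Finsupp.degree m) c rfl))]
      by_cases hd : k = Finsupp.degree m
      · simp [hd, eval_monomial]
      · simp [hd, Ne.symm hd]
  | add q r hq hr =>
      rw [map_add, map_add, Polynomial.coeff_add, map_add, hq, hr]

lemma eval_aeval_CX (p : MvPolynomial (Fin 2) ℝ) (u : Fin 2 → ℝ) (t : ℝ) :
    Polynomial.eval t (MvPolynomial.aeval (fun i => Polynomial.C (u i) * Polynomial.X) p)
      = eval (fun i => u i * t) p := by
  induction p using MvPolynomial.induction_on with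
  | C a => simp
  | add f g hf hg => simp [hf, hg]
  | mul_X f n hf => simp [hf]

open Filter Polynomial
theorem odd_totalDegree_zero_set_unbounded
    (p : MvPolynomial (Fin 2) ℝ) (hp : Odd p.totalDegree) :
    ¬ Bornology.IsBounded {x : Fin 2 → ℝ | eval x p = 0} := by
  intro hb
  obtain ⟨M, hM⟩ := isBounded_iff_forall_norm_le.1 hb
  set d := p.totalDegree with hd
  have hd0 : d ≠ 0 := by rintro h; rw [h] at hp; simp at hp
  have hp0 : p ≠ 0 := by rintro rfl; exact hd0 (by simp [hd])
  set L := homogeneousComponent d p with hLdef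
  have hL : L ≠ 0 := by
    obtain ⟨m, hm, hsup⟩ := Finset.exists_mem_eq_sup p.support
      (MvPolynomial.support_nonempty.2 hp0) (fun m => m.sum fun _ e => e)
    have hmd : Finsupp.degree m = d := by
      rw [hd, MvPolynomial.totalDegree, hsup]; rfl
    intro h
    have := coeff_homogeneousComponent d p m
    rw [← hLdef, h, hmd, if_pos rfl] at this
    exact (MvPolynomial.mem_support_iff.1 hm) this.symm
  obtain ⟨u, hu⟩ : ∃ u : Fin 2 → ℝ, eval u L ≠ 0 := by
    by_contra h
    push_neg at h
    exact hL (MvPolynomial.funext fun x => by rw [h x, map_zero])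
  set q := MvPolynomial.aeval (fun i => Polynomial.C (u i) * Polynomial.X) p with hqdef
  have hcoeff : ∀ k, q.coeff k = eval u (homogeneousComponent k p) := fun k =>
    coeff_aeval_CX p u k
  have hcd : q.coeff d ≠ 0 := by rw [hcoeff d, ← hLdef]; exact hu
  have hqd : q.natDegree = d := by
    apply le_antisymm
    · exact Polynomial.natDegree_le_iff_coeff_eq_zero.2 fun k hk => by
        rw [hcoeff k, homogeneousComponent_eq_zero k p hk, map_zero]
    · exact Polynomial.le_natDegree_of_ne_zero hcd
  have hq0 : q ≠ 0 := fun h => hcd (by rw [h, Polynomial.coeff_zero])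
  have hlc : q.leadingCoeff = eval u L := by rw [Polynomial.leadingCoeff, hqd, hcoeff d, hLdef]
  have hdegpos : 0 < q.degree := by
    rw [Polynomial.degree_eq_natDegree hq0]
    exact_mod_cast hqd ▸ Nat.pos_of_ne_zero hd0
  set q2 := q.comp (-Polynomial.X) with hq2def
  have hq2eval : ∀ t : ℝ, q2.eval t = q.eval (-t) := fun t => by
    rw [hq2def, Polynomial.eval_comp, Polynomial.eval_neg, Polynomial.eval_X]
  have hXnd : (-Polynomial.X : Polynomial ℝ).natDegree = 1 := by simp
  have hq2lc : q2.leadingCoeff = -q.leadingCoeff := by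
    rw [hq2def, Polynomial.leadingCoeff_comp (by rw [hXnd]; exact one_ne_zero)]
    simp [hqd, hp.neg_one_pow]
  have hq2nd : q2.natDegree = d := by rw [hq2def, Polynomial.natDegree_comp, hXnd, hqd, mul_one]
  have hq20 : q2 ≠ 0 := by
    intro h
    rw [h, Polynomial.leadingCoeff_zero] at hq2lc
    exact hq0 (Polynomial.leadingCoeff_eq_zero.1 (neg_eq_zero.1 hq2lc.symm))
  have hdeg2pos : 0 < q2.degree := by
    rw [Polynomial.degree_eq_natDegree hq20]
    exact_mod_cast hq2nd ▸ Nat.pos_of_ne_zero hd0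
  have key : ∀ᶠ t in atTop, q.eval t * q.eval (-t) < 0 := by
    rcases hu.lt_or_gt with hneg | hpos
    · have t1 : Tendsto (fun t => q.eval t) atTop atBot :=
        q.tendsto_atBot_of_leadingCoeff_nonpos hdegpos (by rw [hlc]; exact hneg.le)
      have t2 : Tendsto (fun t => q.eval (-t)) atTop atTop := by
        have := q2.tendsto_atTop_of_leadingCoeff_nonneg hdeg2pos
          (by rw [hq2lc, hlc]; linarith)
        exact this.congr fun t => hq2eval t
      filter_upwards [t1.eventually_lt_atBot 0, t2.eventually_gt_atTop 0] with t h1 h2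
      exact mul_neg_of_neg_of_pos h1 h2
    · have t1 : Tendsto (fun t => q.eval t) atTop atTop :=
        q.tendsto_atTop_of_leadingCoeff_nonneg hdegpos (by rw [hlc]; exact hpos.le)
      have t2 : Tendsto (fun t => q.eval (-t)) atTop atBot := by
        have := q2.tendsto_atBot_of_leadingCoeff_nonpos hdeg2pos
          (by rw [hq2lc, hlc]; linarith)
        exact this.congr fun t => hq2eval t
      filter_upwards [t1.eventually_gt_atTop 0, t2.eventually_lt_atBot 0] with t h1 h2
      exact mul_neg_of_pos_of_neg h1 h2
  obtain ⟨R, hR⟩ := eventually_atTop.1 key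
  have hs : 0 < u 0 ^ 2 + u 1 ^ 2 := by
    rcases (by positivity : (0:ℝ) ≤ u 0 ^ 2 + u 1 ^ 2).lt_or_eq with h | h
    · exact h
    · exfalso
      have h0 : u 0 = 0 := by nlinarith [sq_nonneg (u 0), sq_nonneg (u 1)]
      have h1 : u 1 = 0 := by nlinarith [sq_nonneg (u 0), sq_nonneg (u 1)]
      have hu0 : u = fun _ => 0 := by
        funext i; fin_cases i <;> assumption
      apply hu
      rw [hu0, DFunLike.congr_fun MvPolynomial.eval_zero' L]
      have := coeff_homogeneousComponent d p 0
      rw [← hLdef, map_zero, if_neg (Ne.symm hd0)] at this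
      rw [MvPolynomial.constantCoeff_eq, this]
  set s := u 0 ^ 2 + u 1 ^ 2 with hsdef
  set r := max R (max 1 ((2 * M ^ 2 + 1) / s)) with hrdef
  have hrR : R ≤ r := le_max_left _ _
  have hr1 : (1:ℝ) ≤ r := le_trans (le_max_left _ _) (le_max_right _ _)
  have hrs : 2 * M ^ 2 + 1 ≤ r * s := by
    have h2 : (2 * M ^ 2 + 1) / s ≤ r := le_trans (le_max_right _ _) (le_max_right _ _)
    calc 2 * M ^ 2 + 1 = ((2 * M ^ 2 + 1) / s) * s := by field_simp
    _ ≤ r * s := mul_le_mul_of_nonneg_right h2 hs.le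
  have hsign := hR r hrR
  set w : Fin 2 → ℝ := ![-u 1, u 0] with hwdef
  set g : ℝ → Fin 2 → ℝ := fun θ i =>
    r * (Real.cos θ * u i + Real.sin θ * w i) with hgdef
  have hgc : Continuous g := by
    apply continuous_pi
    intro i
    fun_prop
  have hcont : Continuous fun θ => eval (g θ) p :=
    (MvPolynomial.continuous_eval (p := p)).comp hgc
  have hf0 : eval (g 0) p = q.eval r := by
    have hg0 : g 0 = fun i => u i * r := by
      funext i; simp only [hgdef, Real.cos_zero, Real.sin_zero]; ring
    rw [hg0, hqdef, eval_aeval_CX]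
  have hfpi : eval (g Real.pi) p = q.eval (-r) := by
    have hgpi : g Real.pi = fun i => u i * (-r) := by
      funext i; simp only [hgdef, Real.cos_pi, Real.sin_pi]; ring
    rw [hgpi, hqdef, eval_aeval_CX]
  obtain ⟨θ, hθmem, hθ0⟩ : ∃ θ ∈ Set.Icc (0:ℝ) Real.pi, eval (g θ) p = 0 := by
    rcases lt_or_ge (q.eval r) 0 with hc | hc
    · have hc2 : 0 < q.eval (-r) := by nlinarith [hsign]
      have hsub := intermediate_value_Icc Real.pi_nonneg hcont.continuousOn
        (a := (0:ℝ)) (b := Real.pi)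
      have hmem : (0:ℝ) ∈ Set.Icc (eval (g 0) p) (eval (g Real.pi) p) :=
        ⟨by rw [hf0]; exact hc.le, by rw [hfpi]; exact hc2.le⟩
      obtain ⟨θ, hθ, hθeq⟩ := hsub hmem
      exact ⟨θ, hθ, hθeq⟩
    · have hc1 : 0 < q.eval r := by
        rcases hc.lt_or_eq with h | h
        · exact h
        · exfalso; rw [← h] at hsign; simp at hsign
      have hc2 : q.eval (-r) < 0 := by nlinarith [hsign]
      have hsub := intermediate_value_Icc' Real.pi_nonneg hcont.continuousOn
        (a := (0:ℝ)) (b := Real.pi)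
      have hmem : (0:ℝ) ∈ Set.Icc (eval (g Real.pi) p) (eval (g 0) p) :=
        ⟨by rw [hfpi]; exact hc2.le, by rw [hf0]; exact hc1.le⟩
      obtain ⟨θ, hθ, hθeq⟩ := hsub hmem
      exact ⟨θ, hθ, hθeq⟩
  have hxM : ‖g θ‖ ≤ M := hM _ hθ0
  have hx0 : |g θ 0| ≤ M := by
    have := norm_le_pi_norm (g θ) 0
    rw [Real.norm_eq_abs] at this
    exact this.trans hxM
  have hx1 : |g θ 1| ≤ M := by
    have := norm_le_pi_norm (g θ) 1
    rw [Real.norm_eq_abs] at this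
    exact this.trans hxM
  have hM0 : 0 ≤ M := le_trans (abs_nonneg _) hx0
  have e : (g θ 0) ^ 2 + (g θ 1) ^ 2 = r ^ 2 * s := by
    simp only [hgdef, hwdef, hsdef, Matrix.cons_val_zero, Matrix.cons_val_one, Matrix.head_cons]
    linear_combination (r ^ 2 * (u 0 ^ 2 + u 1 ^ 2)) * (Real.sin_sq_add_cos_sq θ)
  have hr0 : (0:ℝ) < r := lt_of_lt_of_le one_pos hr1
  have hb0 : (g θ 0) ^ 2 ≤ M ^ 2 := by
    have h := abs_le.mp hx0
    exact sq_le_sq' (by linarith [h.1]) h.2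
  have hb1 : (g θ 1) ^ 2 ≤ M ^ 2 := by
    have h := abs_le.mp hx1
    exact sq_le_sq' (by linarith [h.1]) h.2
  have h2 : r ^ 2 * s ≤ 2 * M ^ 2 := by rw [← e]; linarith
  have h3 : 2 * M ^ 2 + 1 ≤ r ^ 2 * s := by
    nlinarith [mul_le_mul_of_nonneg_left hrs hr0.le, hr1, hM0, sq_nonneg M]
  linarith
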